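/- arXiv:1307.1176 — 2 statements merged into one kernel-verified Lean document; each statement's English description precedes it below -/
import Mathlib

section
/- Let k ∈ ℝ, d > 0, an integer p ≥ 1, and W > 0 be given. Then there exist constants C > 0 and R > 0 such that for all ρ ≥ R and all w ∈ [−W, W], the p-th alternating difference of the shifted Helmholtz kernel satisfies |Σ_{q=0}^p (−1)^q binom(p,q) · e^{i k √(ρ² + (w + q d)²)} / √(ρ² + (w + q d)²)| ≤ C · ρ^{−(⌈p/2⌉ + 1)}, where ⌈·⌉ denotes the ceiling. -/
open scoped BigOperators
open Filter Topology

noncomputable section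

namespace ShiftedKernelAux

open Complex fwdDiff

/-! ### The basic functions -/

def sfun (ρ t : ℝ) : ℝ := Real.sqrt (ρ ^ 2 + t ^ 2)

lemma sfun_pos {ρ : ℝ} (hρ : 0 < ρ) (t : ℝ) : 0 < sfun ρ t :=
  Real.sqrt_pos.mpr (by positivity)

lemma sfun_ge {ρ : ℝ} (hρ : 0 < ρ) (t : ℝ) : ρ ≤ sfun ρ t := by
  rw [sfun, show ρ ^ 2 + t ^ 2 = ρ ^ 2 + t ^ 2 from rfl]
  have h := Real.sqrt_le_sqrt (show ρ ^ 2 ≤ ρ ^ 2 + t ^ 2 by nlinarith)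
  rwa [Real.sqrt_sq hρ.le] at h

def cfun (k ρ : ℝ) (n : ℕ) (t : ℝ) : ℂ :=
  Complex.exp (Complex.I * k * ((sfun ρ t : ℝ) : ℂ)) / ((sfun ρ t : ℝ) : ℂ) ^ n

lemma norm_cfun_le (k : ℝ) {ρ : ℝ} (hρ : 1 ≤ ρ) (n : ℕ) (t : ℝ) :
    ‖cfun k ρ n t‖ ≤ 1 / ρ ^ n := by
  have hρ0 : (0:ℝ) < ρ := lt_of_lt_of_le one_pos hρ
  have hs : 0 < sfun ρ t := sfun_pos hρ0 t
  have hsρ : ρ ≤ sfun ρ t := sfun_ge hρ0 t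
  have h1 : ‖Complex.exp (Complex.I * k * ((sfun ρ t : ℝ) : ℂ))‖ = 1 := by
    rw [Complex.norm_exp]
    have : (Complex.I * k * ((sfun ρ t : ℝ) : ℂ)).re = 0 := by simp
    rw [this, Real.exp_zero]
  have h2 : ‖((sfun ρ t : ℝ) : ℂ)‖ = sfun ρ t := by
    rw [Complex.norm_real, Real.norm_eq_abs, abs_of_pos hs]
  rw [cfun, norm_div, norm_pow, h1, h2]
  exact one_div_le_one_div_of_le (pow_pos hρ0 n) (pow_le_pow_left₀ hρ0.le hsρ n)

/-! ### Derivatives -/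

lemma hasDerivAt_sfun {ρ : ℝ} (hρ : 0 < ρ) (t : ℝ) :
    HasDerivAt (sfun ρ) (t / sfun ρ t) t := by
  have hx : (0:ℝ) < ρ ^ 2 + t ^ 2 := by positivity
  have hq : HasDerivAt (fun u : ℝ => ρ ^ 2 + u ^ 2) (2 * t) t := by
    simpa using (hasDerivAt_pow 2 t).const_add (ρ ^ 2)
  have h := (Real.hasDerivAt_sqrt hx.ne').comp t hq
  have hcomp : (fun x => Real.sqrt x) ∘ (fun u : ℝ => ρ ^ 2 + u ^ 2) = sfun ρ := rfl
  rw [hcomp] at h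
  refine h.congr_deriv ?_
  symm
  have hne : Real.sqrt (ρ ^ 2 + t ^ 2) ≠ 0 := (Real.sqrt_pos.mpr hx).ne'
  rw [sfun]
  field_simp

lemma hasDerivAt_cfun (k : ℝ) {ρ : ℝ} (hρ : 0 < ρ) (n : ℕ) (t : ℝ) :
    HasDerivAt (cfun k ρ n)
      (Complex.I * k * t * cfun k ρ (n + 1) t - n * t * cfun k ρ (n + 2) t) t := by
  have hs := sfun_pos hρ t
  have hsC : ((sfun ρ t : ℝ) : ℂ) ≠ 0 := by exact_mod_cast hs.ne'
  have hsdC : HasDerivAt (fun u : ℝ => ((sfun ρ u : ℝ) : ℂ)) ((t / sfun ρ t : ℝ) : ℂ) t :=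
    (hasDerivAt_sfun hρ t).ofReal_comp
  have hexp : HasDerivAt (fun u : ℝ => Complex.exp (Complex.I * k * ((sfun ρ u : ℝ) : ℂ)))
      (Complex.exp (Complex.I * k * ((sfun ρ t : ℝ) : ℂ)) *
        (Complex.I * k * ((t / sfun ρ t : ℝ) : ℂ))) t :=
    (hsdC.const_mul (Complex.I * k)).cexp
  have hpowR : HasDerivAt (fun u : ℝ => (sfun ρ u) ^ n)
      ((n : ℝ) * (sfun ρ t) ^ (n - 1) * (t / sfun ρ t)) t := (hasDerivAt_sfun hρ t).pow n
  have hpow : HasDerivAt (fun u : ℝ => ((sfun ρ u : ℝ) : ℂ) ^ n)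
      ((((n : ℝ) * (sfun ρ t) ^ (n - 1) * (t / sfun ρ t) : ℝ)) : ℂ) t := by
    have hfe : (fun u : ℝ => ((sfun ρ u : ℝ) : ℂ) ^ n)
        = fun u : ℝ => (((sfun ρ u ^ n : ℝ)) : ℂ) := by
      funext u; push_cast; ring
    rw [hfe]
    exact hpowR.ofReal_comp
  have hdiv := hexp.div hpow (pow_ne_zero n hsC)
  show HasDerivAt (fun u : ℝ => Complex.exp (Complex.I * k * ((sfun ρ u : ℝ) : ℂ)) /
      ((sfun ρ u : ℝ) : ℂ) ^ n) _ t
  refine hdiv.congr_deriv ?_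
  symm
  rw [cfun, cfun]
  rcases n with _ | m
  · simp only [Nat.zero_sub, pow_zero, pow_one]
    push_cast
    field_simp
    ring
  · simp only [Nat.add_sub_cancel]
    push_cast
    field_simp
    ring

/-! ### Lists of terms `c * t^a / s^n` -/

def tval (k ρ : ℝ) (e : ℂ × ℕ × ℕ) (t : ℝ) : ℂ :=
  e.1 * ((t : ℂ) ^ e.2.1 * cfun k ρ e.2.2 t)

def Lsum (k ρ : ℝ) (L : List (ℂ × ℕ × ℕ)) (t : ℝ) : ℂ :=
  (L.map fun e => tval k ρ e t).sum

def stepT (k : ℝ) (e : ℂ × ℕ × ℕ) : List (ℂ × ℕ × ℕ) :=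
  [(e.1 * e.2.1, e.2.1 - 1, e.2.2),
   (e.1 * (Complex.I * k), e.2.1 + 1, e.2.2 + 1),
   (-(e.1 * e.2.2), e.2.1 + 1, e.2.2 + 2)]

def stepL (k : ℝ) (L : List (ℂ × ℕ × ℕ)) : List (ℂ × ℕ × ℕ) := L.flatMap (stepT k)

lemma hasDerivAt_tval (k : ℝ) {ρ : ℝ} (hρ : 0 < ρ) (e : ℂ × ℕ × ℕ) (t : ℝ) :
    HasDerivAt (fun u => tval k ρ e u) (Lsum k ρ (stepT k e) t) t := by
  obtain ⟨c, a, n⟩ := e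
  have hpow : HasDerivAt (fun u : ℝ => ((u : ℝ) : ℂ) ^ a) ((a : ℂ) * (t : ℂ) ^ (a - 1)) t := by
    exact (hasDerivAt_pow a ((t : ℝ) : ℂ)).comp_ofReal
  have hc := hasDerivAt_cfun k hρ n t
  have h2 := (hpow.mul hc).const_mul c
  refine h2.congr_deriv ?_
  symm
  simp only [Lsum, stepT, tval, List.map_cons, List.map_nil, List.sum_cons, List.sum_nil,
    add_zero]
  rcases a with _ | b
  · simp only [Nat.cast_zero, pow_zero, zero_mul, mul_zero, Nat.zero_sub]
    push_cast
    ring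
  · have h1 : b + 1 - 1 = b := rfl
    rw [h1]
    push_cast
    ring

lemma hasDerivAt_Lsum (k : ℝ) {ρ : ℝ} (hρ : 0 < ρ) (L : List (ℂ × ℕ × ℕ)) (t : ℝ) :
    HasDerivAt (fun u => Lsum k ρ L u) (Lsum k ρ (stepL k L) t) t := by
  induction L with
  | nil => simpa [Lsum, stepL] using hasDerivAt_const t (0 : ℂ)
  | cons e L ih =>
    have h1 := (hasDerivAt_tval k hρ e t).add ih
    have hfun : (fun u => Lsum k ρ (e :: L) u) = fun u => tval k ρ e u + Lsum k ρ L u := by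
      funext u; simp [Lsum]
    have hval : Lsum k ρ (stepL k (e :: L)) t
        = Lsum k ρ (stepT k e) t + Lsum k ρ (stepL k L) t := by
      simp [Lsum, stepL, List.flatMap_cons]
    rw [hfun, hval]
    exact h1

def good (p : ℕ) (L : List (ℂ × ℕ × ℕ)) : Prop :=
  ∀ e ∈ L, e.1 = 0 ∨ p + e.2.1 + 2 ≤ 2 * e.2.2

lemma good_step {p : ℕ} {L : List (ℂ × ℕ × ℕ)} (k : ℝ) (h : good p L) :
    good (p + 1) (stepL k L) := by
  intro e' he'
  rw [stepL, List.mem_flatMap] at he'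
  obtain ⟨e, heL, he'⟩ := he'
  obtain ⟨c, a, n⟩ := e
  simp only [stepT, List.mem_cons, List.mem_singleton, List.not_mem_nil, or_false] at he'
  rcases h _ heL with hc | hineq
  · simp only at hc
    rcases he' with rfl | rfl | rfl <;> simp [hc]
  · simp only at hineq
    rcases he' with rfl | rfl | rfl
    · rcases Nat.eq_zero_or_pos a with ha | ha
      · left; simp [ha]
      · right; simp only; omega
    · right; simp only; omega
    · right; simp only; omega

lemma structure_lemma (k : ℝ) (p : ℕ) :
    ∃ L : List (ℂ × ℕ × ℕ), good p L ∧
      ∀ ρ : ℝ, 0 < ρ → ∀ t : ℝ, iteratedDeriv p (cfun k ρ 1) t = Lsum k ρ L t := by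
  induction p with
  | zero =>
    refine ⟨[(1, 0, 1)], ?_, ?_⟩
    · intro e he
      simp only [List.mem_singleton] at he
      subst he
      right; norm_num
    · intro ρ hρ t
      simp [Lsum, tval, iteratedDeriv_zero]
  | succ p ih =>
    obtain ⟨L, hgood, hrepr⟩ := ih
    refine ⟨stepL k L, good_step k hgood, ?_⟩
    intro ρ hρ t
    rw [iteratedDeriv_succ]
    have hfe : iteratedDeriv p (cfun k ρ 1) = fun u => Lsum k ρ L u := funext (hrepr ρ hρ)
    rw [hfe]
    exact (hasDerivAt_Lsum k hρ L t).deriv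

/-! ### Bounding a list sum -/

lemma norm_tval_le (k : ℝ) {ρ T t : ℝ} (hρ : 1 ≤ ρ) (hT : 0 ≤ T) (ht : |t| ≤ T)
    {p : ℕ} {e : ℂ × ℕ × ℕ} (he : e.1 = 0 ∨ p + e.2.1 + 2 ≤ 2 * e.2.2) :
    ‖tval k ρ e t‖ ≤ ‖e.1‖ * T ^ e.2.1 / ρ ^ ((p + 1) / 2 + 1) := by
  have hρ0 : (0:ℝ) < ρ := lt_of_lt_of_le one_pos hρ
  obtain ⟨c, a, n⟩ := e
  rcases he with hc | hn
  · simp only at hc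
    subst hc
    simp only [tval, zero_mul, norm_zero, norm_zero]
    positivity
  · simp only at hn ⊢
    have h1 : ‖tval k ρ (c, a, n) t‖ = ‖c‖ * (|t| ^ a * ‖cfun k ρ n t‖) := by
      simp [tval, norm_mul, norm_pow, Complex.norm_real, Real.norm_eq_abs]
    rw [h1]
    have h2 : ‖cfun k ρ n t‖ ≤ 1 / ρ ^ ((p + 1) / 2 + 1) := by
      refine (norm_cfun_le k hρ n t).trans ?_
      apply one_div_le_one_div_of_le (by positivity)
      exact pow_le_pow_right₀ hρ (by omega)
    calc ‖c‖ * (|t| ^ a * ‖cfun k ρ n t‖)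
        ≤ ‖c‖ * (T ^ a * (1 / ρ ^ ((p + 1) / 2 + 1))) := by
          gcongr
      _ = ‖c‖ * T ^ a / ρ ^ ((p + 1) / 2 + 1) := by ring

lemma norm_Lsum_le (k : ℝ) {ρ T t : ℝ} (hρ : 1 ≤ ρ) (hT : 0 ≤ T) (ht : |t| ≤ T)
    {p : ℕ} (L : List (ℂ × ℕ × ℕ)) (hgood : good p L) :
    ‖Lsum k ρ L t‖ ≤ (L.map fun e => ‖e.1‖ * T ^ e.2.1).sum / ρ ^ ((p + 1) / 2 + 1) := by
  have hρ0 : (0:ℝ) < ρ := lt_of_lt_of_le one_pos hρ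
  induction L with
  | nil => simp [Lsum]
  | cons e L ih =>
    have h1 : Lsum k ρ (e :: L) t = tval k ρ e t + Lsum k ρ L t := by simp [Lsum]
    have h2 := ih (fun e' he' => hgood e' (List.mem_cons_of_mem e he'))
    have h3 := norm_tval_le k hρ hT ht (hgood e (List.mem_cons_self (a := e) (l := L)))
    rw [h1, List.map_cons, List.sum_cons, add_div]
    exact (norm_add_le _ _).trans (add_le_add h3 h2)

/-! ### Smoothness -/

lemma contDiff_cfun (k : ℝ) {ρ : ℝ} (hρ : 0 < ρ) (n : ℕ) (m : ℕ) :
    ContDiff ℝ m (cfun k ρ n) := by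
  have hsq : ContDiff ℝ m (fun t : ℝ => sfun ρ t) := by
    rw [contDiff_iff_contDiffAt]
    intro t
    have hx : ρ ^ 2 + t ^ 2 ≠ 0 := by positivity
    exact (Real.contDiffAt_sqrt hx).comp t (contDiff_const.add (contDiff_id.pow 2)).contDiffAt
  have hsC : ContDiff ℝ m fun t : ℝ => ((sfun ρ t : ℝ) : ℂ) :=
    (ContinuousLinearMap.contDiff (𝕜 := ℝ) (n := m) Complex.ofRealCLM).comp hsq
  have hinv : ContDiff ℝ m fun t : ℝ => (((sfun ρ t : ℝ) : ℂ) ^ n)⁻¹ :=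
    (hsC.pow n).inv fun t => pow_ne_zero n (by exact_mod_cast (sfun_pos hρ t).ne')
  have hmul := (((contDiff_const (c := Complex.I * (k : ℂ))).mul hsC).cexp).mul hinv
  have hfe : cfun k ρ n = fun t : ℝ =>
      Complex.exp (Complex.I * k * ((sfun ρ t : ℝ) : ℂ)) * (((sfun ρ t : ℝ) : ℂ) ^ n)⁻¹ := by
    funext t
    rw [cfun, div_eq_mul_inv]
  rw [hfe]
  exact hmul

/-! ### Differences -/

lemma iteratedDeriv_sub' {n : ℕ} {f g : ℝ → ℂ} (hf : ContDiff ℝ n f) (hg : ContDiff ℝ n g)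
    (x : ℝ) :
    iteratedDeriv n (fun t => f t - g t) x = iteratedDeriv n f x - iteratedDeriv n g x := by
  have h2 : iteratedFDeriv ℝ n (fun u => -g u) x = -iteratedFDeriv ℝ n g x := by
    have hgg : (fun u => -g u) = -g := rfl
    rw [hgg, iteratedFDeriv_neg_apply]
  have h1 : iteratedFDeriv ℝ n (fun t => f t - g t) x
      = iteratedFDeriv ℝ n f x + iteratedFDeriv ℝ n (fun u => -g u) x := by
    have hfg : (fun t => f t - g t) = fun t => f t + (fun u => -g u) t := by
      funext t; ring
    rw [hfg]
    exact iteratedFDeriv_add_apply' hf.contDiffAt hg.neg.contDiffAt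
  simp only [iteratedDeriv_eq_iteratedFDeriv, h1, h2]
  simp [ContinuousMultilinearMap.neg_apply, sub_eq_add_neg, ContinuousMultilinearMap.add_apply]

lemma fwdDiff_iter_norm_le {d : ℝ} (hd : 0 < d) :
    ∀ (p : ℕ) (f : ℝ → ℂ), (∀ m : ℕ, ContDiff ℝ m f) → ∀ (M w : ℝ),
      (∀ t ∈ Set.Icc w (w + (p : ℝ) * d), ‖iteratedDeriv p f t‖ ≤ M) →
      ‖(Δ_[d])^[p] f w‖ ≤ d ^ p * M := by
  intro p
  induction p with
  | zero =>
    intro f hf M w hM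
    simpa using hM w (by constructor <;> norm_num)
  | succ p ih =>
    intro f hf M w hM
    rw [Function.iterate_succ_apply]
    have hΔf : ∀ m : ℕ, ContDiff ℝ m (Δ_[d] f) := by
      intro m
      have h1 : ContDiff ℝ m (fun t : ℝ => f (t + d)) :=
        (hf m).comp (contDiff_id.add contDiff_const)
      exact h1.sub (hf m)
    have hder : ∀ x : ℝ, HasDerivAt (iteratedDeriv p f) (iteratedDeriv (p + 1) f x) x := by
      intro x
      have hdiff : DifferentiableAt ℝ (iteratedDeriv p f) x :=
        (((hf (p + 1)).differentiable_iteratedDeriv p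
          (by exact_mod_cast p.lt_succ_self)) x)
      rw [iteratedDeriv_succ]
      exact hdiff.hasDerivAt
    have heq : ∀ u : ℝ, iteratedDeriv p (Δ_[d] f) u
        = iteratedDeriv p f (u + d) - iteratedDeriv p f u := by
      intro u
      have h1 : iteratedDeriv p (fun x : ℝ => f (x + d)) u = iteratedDeriv p f (u + d) := by
        rw [iteratedDeriv_comp_add_const]
      have h2 : ContDiff ℝ p (fun x : ℝ => f (x + d)) :=
        (hf p).comp (contDiff_id.add contDiff_const)
      calc iteratedDeriv p (Δ_[d] f) u
          = iteratedDeriv p (fun x : ℝ => f (x + d) - f x) u := rfl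
        _ = iteratedDeriv p (fun x : ℝ => f (x + d)) u - iteratedDeriv p f u :=
            iteratedDeriv_sub' h2 (hf p) u
        _ = iteratedDeriv p f (u + d) - iteratedDeriv p f u := by rw [h1]
    have hbound : ∀ u ∈ Set.Icc w (w + (p : ℝ) * d),
        ‖iteratedDeriv p (Δ_[d] f) u‖ ≤ d * M := by
      intro u hu
      obtain ⟨hu1, hu2⟩ := hu
      rw [heq u]
      have key := norm_image_sub_le_of_norm_deriv_le_segment'
        (f := iteratedDeriv p f) (f' := iteratedDeriv (p + 1) f) (a := u) (b := u + d)
        (C := M)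
        (fun x _ => (hder x).hasDerivWithinAt)
        (fun x hx => by
          refine hM x ⟨?_, ?_⟩
          · exact le_trans hu1 hx.1
          · push_cast
            have := hx.2
            nlinarith)
        (u + d) ⟨by linarith, le_refl _⟩
      calc ‖iteratedDeriv p f (u + d) - iteratedDeriv p f u‖ ≤ M * (u + d - u) := key
        _ = d * M := by ring
    calc ‖(Δ_[d])^[p] (Δ_[d] f) w‖ ≤ d ^ p * (d * M) := ih (Δ_[d] f) hΔf (d * M) w hbound
      _ = d ^ (p + 1) * M := by ring

lemma sum_eq_fwdDiff (d : ℝ) (p : ℕ) (f : ℝ → ℂ) (w : ℝ) :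
    ∑ q ∈ Finset.range (p + 1), (-1 : ℂ) ^ q * (p.choose q : ℂ) * f (w + q * d)
      = (-1 : ℂ) ^ p * (Δ_[d])^[p] f w := by
  rw [fwdDiff_iter_eq_sum_shift, Finset.mul_sum]
  refine Finset.sum_congr rfl fun q hq => ?_
  have hqp : q ≤ p := Nat.lt_succ_iff.mp (Finset.mem_range.mp hq)
  have hsm : (q • d : ℝ) = (q : ℝ) * d := by simp
  rw [hsm, zsmul_eq_mul]
  push_cast
  have hpow : (-1 : ℂ) ^ q = (-1 : ℂ) ^ p * (-1 : ℂ) ^ (p - q) := by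
    calc (-1 : ℂ) ^ q = ((-1) * (-1)) ^ (p - q) * (-1 : ℂ) ^ q := by norm_num
      _ = (-1 : ℂ) ^ ((p - q) + q) * (-1 : ℂ) ^ (p - q) := by rw [pow_add, mul_pow]; ring
      _ = (-1 : ℂ) ^ p * (-1 : ℂ) ^ (p - q) := by rw [Nat.sub_add_cancel hqp]
  rw [hpow]
  ring

lemma ceil_half (p : ℕ) : ⌈(p : ℝ) / 2⌉₊ = (p + 1) / 2 := by
  rcases Nat.even_or_odd p with ⟨m, rfl⟩ | ⟨m, rfl⟩
  · have h1 : ((m + m : ℕ) : ℝ) / 2 = (m : ℝ) := by push_cast; ring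
    rw [h1, Nat.ceil_natCast]
    omega
  · have h1 : ((2 * m + 1 : ℕ) : ℝ) / 2 = (m : ℝ) + 1 / 2 := by push_cast; ring
    rw [h1]
    have h2 : ⌈(m : ℝ) + 1 / 2⌉₊ = m + 1 := by
      rw [Nat.ceil_eq_iff (by omega)]
      constructor
      · push_cast
        norm_num
      · push_cast
        norm_num
    rw [h2]
    omega

end ShiftedKernelAux

open ShiftedKernelAux

/-- Decay of the `p`-th alternating difference of the shifted Helmholtz kernel:
`|Σ_{q=0}^p (-1)^q (p choose q) e^{ik√(ρ²+(w+qd)²)}/√(ρ²+(w+qd)²)| ≤ C ρ^{-(⌈p/2⌉+1)}`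
uniformly for `w ∈ [-W, W]` and `ρ ≥ R`. -/
theorem shifted_kernel_alternating_difference_decay
    (k : ℝ) (d : ℝ) (hd : 0 < d) (p : ℕ) (hp : 1 ≤ p) (W : ℝ) (hW : 0 < W) :
    ∃ C > 0, ∃ R > 0, ∀ ρ : ℝ, R ≤ ρ → ∀ w ∈ Set.Icc (-W) W,
      ‖∑ q ∈ Finset.range (p + 1),
          (-1 : ℂ) ^ q * (p.choose q : ℂ) *
            Complex.exp (Complex.I * (k : ℂ) *
              ((Real.sqrt (ρ ^ 2 + (w + (q : ℝ) * d) ^ 2) : ℝ) : ℂ)) /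
            ((Real.sqrt (ρ ^ 2 + (w + (q : ℝ) * d) ^ 2) : ℝ) : ℂ)‖
        ≤ C / ρ ^ (⌈(p : ℝ) / 2⌉₊ + 1) := by
  obtain ⟨L, hgood, hrepr⟩ := structure_lemma k p
  set T : ℝ := W + (p : ℝ) * d with hTdef
  have hT0 : 0 ≤ T := by positivity
  set K : ℝ := (L.map fun e => ‖e.1‖ * T ^ e.2.1).sum with hKdef
  have hK0 : 0 ≤ K := by
    rw [hKdef]
    apply List.sum_nonneg
    intro x hx
    simp only [List.mem_map] at hx
    obtain ⟨e, -, rfl⟩ := hx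
    positivity
  refine ⟨d ^ p * K + 1, by positivity, 1, one_pos, ?_⟩
  intro ρ hρ w hw
  have hρ0 : (0:ℝ) < ρ := lt_of_lt_of_le one_pos hρ
  obtain ⟨hw1, hw2⟩ := hw
  rw [ceil_half p]
  set m : ℕ := (p + 1) / 2 with hmdef
  -- rewrite summand via cfun
  have hterm : ∀ q : ℕ,
      (-1 : ℂ) ^ q * (p.choose q : ℂ) *
          Complex.exp (Complex.I * (k : ℂ) *
            ((Real.sqrt (ρ ^ 2 + (w + (q : ℝ) * d) ^ 2) : ℝ) : ℂ)) /
          ((Real.sqrt (ρ ^ 2 + (w + (q : ℝ) * d) ^ 2) : ℝ) : ℂ)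
        = (-1 : ℂ) ^ q * (p.choose q : ℂ) * cfun k ρ 1 (w + (q : ℝ) * d) := by
    intro q
    rw [cfun, sfun, pow_one, mul_div_assoc]
  rw [Finset.sum_congr rfl fun q _ => hterm q]
  rw [sum_eq_fwdDiff d p (cfun k ρ 1) w]
  -- bound the derivative
  have hder_bound : ∀ t ∈ Set.Icc w (w + (p : ℝ) * d),
      ‖iteratedDeriv p (cfun k ρ 1) t‖ ≤ K / ρ ^ (m + 1) := by
    intro t ht
    obtain ⟨ht1, ht2⟩ := ht
    have habs : |t| ≤ T := by
      rw [abs_le, hTdef]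
      have hpd : 0 ≤ (p : ℝ) * d := by positivity
      constructor <;> nlinarith
    rw [hrepr ρ hρ0 t]
    exact norm_Lsum_le k hρ hT0 habs L hgood
  have hmain := fwdDiff_iter_norm_le hd p (cfun k ρ 1) (contDiff_cfun k hρ0 1)
    (K / ρ ^ (m + 1)) w hder_bound
  have habs1 : ‖(-1 : ℂ) ^ p * (fwdDiff d)^[p] (cfun k ρ 1) w‖
      = ‖(fwdDiff d)^[p] (cfun k ρ 1) w‖ := by
    rw [norm_mul, norm_pow]
    simp
  rw [habs1]
  calc ‖(fwdDiff d)^[p] (cfun k ρ 1) w‖ ≤ d ^ p * (K / ρ ^ (m + 1)) := hmain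
    _ = d ^ p * K / ρ ^ (m + 1) := by ring
    _ ≤ (d ^ p * K + 1) / ρ ^ (m + 1) := by
        gcongr
        linarith
end
end

section
/- Let f : ℝ² → ℝ be twice continuously differentiable on a neighborhood of (x₀, y₀) and let θ ∈ ℝ. For ρ ≠ 0 define R(ρ) = (−ρ cos θ, −ρ sin θ, f(x₀,y₀) − f(x₀ + ρ cos θ, y₀ + ρ sin θ)) ∈ ℝ³ and N(ρ) = (−∂ₓf(x₀ + ρ cos θ, y₀ + ρ sin θ), −∂_yf(x₀ + ρ cos θ, y₀ + ρ sin θ), 1) ∈ ℝ³. Then as ρ → 0 through nonzero values, (R(ρ) · N(ρ)) / ρ² converges to (1/2)(∂ₓₓf(x₀,y₀) cos²θ + 2 ∂ₓᵧf(x₀,y₀) cos θ sin θ + ∂ᵧᵧf(x₀,y₀) sin²θ). -/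
open Filter Topology

noncomputable section

/-- For `f` twice continuously differentiable near `(x₀,y₀)`, with
`R(ρ) = (-ρ cos θ, -ρ sin θ, f(x₀,y₀) - f(x₀+ρ cos θ, y₀+ρ sin θ))` and
`N(ρ) = (-∂ₓf(pt_ρ), -∂ᵧf(pt_ρ), 1)` where `pt_ρ = (x₀+ρ cos θ, y₀+ρ sin θ)`, one has
`(R(ρ)·N(ρ))/ρ² → (1/2)(∂ₓₓf cos²θ + 2 ∂ₓᵧf cos θ sin θ + ∂ᵧᵧf sin²θ)` as `ρ → 0`, `ρ ≠ 0`
(the dot product written out in coordinates). -/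
theorem polar_limit_of_chord_dot_normal
    (f : ℝ × ℝ → ℝ) (x₀ y₀ : ℝ)
    (U : Set (ℝ × ℝ)) (hU : U ∈ nhds ((x₀, y₀) : ℝ × ℝ)) (hf : ContDiffOn ℝ 2 f U)
    (θ : ℝ) :
    Filter.Tendsto (fun ρ : ℝ =>
        ((-(ρ * Real.cos θ)) *
            (-(fderiv ℝ f (x₀ + ρ * Real.cos θ, y₀ + ρ * Real.sin θ) (1, 0))) +
          (-(ρ * Real.sin θ)) *
            (-(fderiv ℝ f (x₀ + ρ * Real.cos θ, y₀ + ρ * Real.sin θ) (0, 1))) +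
          (f (x₀, y₀) - f (x₀ + ρ * Real.cos θ, y₀ + ρ * Real.sin θ)) * 1) / ρ ^ 2)
      (nhdsWithin (0 : ℝ) {0}ᶜ)
      (nhds ((1 / 2) *
        (fderiv ℝ (fun q : ℝ × ℝ => fderiv ℝ f q (1, 0)) (x₀, y₀) (1, 0) * Real.cos θ ^ 2 +
          2 * fderiv ℝ (fun q : ℝ × ℝ => fderiv ℝ f q (1, 0)) (x₀, y₀) (0, 1) *
            Real.cos θ * Real.sin θ +
          fderiv ℝ (fun q : ℝ × ℝ => fderiv ℝ f q (0, 1)) (x₀, y₀) (0, 1) * Real.sin θ ^ 2))) := by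
  set c := Real.cos θ
  set s := Real.sin θ
  obtain ⟨V, hVU, hVo, hpV⟩ := mem_nhds_iff.mp hU
  have hfV : ContDiffOn ℝ 2 f V := hf.mono hVU
  set φ : ℝ → ℝ × ℝ := fun ρ => (x₀ + ρ * c, y₀ + ρ * s) with hφdef
  have hφ : ∀ ρ : ℝ, HasDerivAt φ (c, s) ρ := fun ρ => by
    simpa using HasDerivAt.prodMk (((hasDerivAt_id ρ).mul_const c).const_add x₀)
      (((hasDerivAt_id ρ).mul_const s).const_add y₀)
  have hφc : Continuous φ := by fun_prop
  have hφ0 : φ 0 = (x₀, y₀) := by simp [hφdef]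
  set W := φ ⁻¹' V with hWdef
  have hWo : IsOpen W := hVo.preimage hφc
  have h0W : (0 : ℝ) ∈ W := by simp [hWdef, hφ0, hpV]
  have hfd : ∀ q ∈ V, DifferentiableAt ℝ f q := fun q hq =>
    (hfV.differentiableOn (by norm_num)).differentiableAt (hVo.mem_nhds hq)
  set F := fderiv ℝ f with hFdef
  have hF : ContDiffOn ℝ 1 F V := hfV.fderiv_of_isOpen hVo (by norm_num)
  have hFd : ∀ q ∈ V, DifferentiableAt ℝ F q := fun q hq =>
    (hF.differentiableOn one_ne_zero).differentiableAt (hVo.mem_nhds hq)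
  -- second derivative
  set f'' := fderiv ℝ F (x₀, y₀) with hf''def
  have hf''at : HasFDerivAt F f'' (x₀, y₀) := (hFd _ hpV).hasFDerivAt
  have hsymm : ∀ a b : ℝ × ℝ, f'' a b = f'' b a := by
    intro a b
    refine second_derivative_symmetric_of_eventually (f := f) ?_ hf''at a b
    filter_upwards [hVo.mem_nhds hpV] with q hq using (hfd q hq).hasFDerivAt
  -- g and its derivative along the line
  set g : ℝ → ℝ := fun ρ => f (φ ρ) with hgdef
  set G : ℝ → ℝ := fun ρ => F (φ ρ) (c, s) with hGdef
  have hg' : ∀ ρ ∈ W, HasDerivAt g (G ρ) ρ := fun ρ hρ =>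
    ((hfd _ hρ).hasFDerivAt.comp_hasDerivAt ρ (hφ ρ))
  set G' : ℝ → ℝ := fun ρ => (fderiv ℝ F (φ ρ) (c, s)) (c, s) with hG'def
  have hG' : ∀ ρ ∈ W, HasDerivAt G (G' ρ) ρ := by
    intro ρ hρ
    have h1 : HasDerivAt (fun ρ => F (φ ρ)) (fderiv ℝ F (φ ρ) (c, s)) ρ :=
      (hFd _ hρ).hasFDerivAt.comp_hasDerivAt ρ (hφ ρ)
    exact (ContinuousLinearMap.apply ℝ ℝ ((c, s) : ℝ × ℝ)).hasFDerivAt.comp_hasDerivAt ρ h1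
  -- the auxiliary function h and L'Hopital
  set h : ℝ → ℝ := fun ρ => ρ * G ρ - g ρ + g 0 with hhdef
  have hh' : ∀ ρ ∈ W, HasDerivAt h (ρ * G' ρ) ρ := by
    intro ρ hρ
    have h1 : HasDerivAt (fun x : ℝ => x * G x) (1 * G ρ + ρ * G' ρ) ρ := by
      exact (hasDerivAt_id' ρ).mul (hG' ρ hρ)
    have h2 := (h1.sub (hg' ρ hρ)).add_const (g 0)
    exact h2.congr_deriv (by ring)
  have hWnhds : W ∈ 𝓝 (0 : ℝ) := hWo.mem_nhds h0W
  have hG'cont : Tendsto G' (𝓝 0) (𝓝 (G' 0)) := by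
    have hcontF' : ContinuousOn (fderiv ℝ F) V := hF.continuousOn_fderiv_of_isOpen hVo le_rfl
    have h1 : ContinuousAt (fun ρ : ℝ => fderiv ℝ F (φ ρ)) 0 := by
      apply ContinuousAt.comp _ hφc.continuousAt
      rw [hφ0]
      exact hcontF'.continuousAt (hVo.mem_nhds hpV)
    have h2 : ContinuousAt (fun ρ : ℝ => fderiv ℝ F (φ ρ) ((c, s) : ℝ × ℝ)) 0 := by
      simpa [Function.comp_def] using
        (ContinuousLinearMap.apply ℝ (ℝ × ℝ →L[ℝ] ℝ)
          ((c, s) : ℝ × ℝ)).continuous.continuousAt.comp h1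
    have h3 : ContinuousAt G' 0 := by
      simpa [Function.comp_def, hG'def] using
        (ContinuousLinearMap.apply ℝ ℝ ((c, s) : ℝ × ℝ)).continuous.continuousAt.comp h2
    exact h3.tendsto
  have hG'0 : G' 0 = f'' ((c, s) : ℝ × ℝ) ((c, s) : ℝ × ℝ) := by
    simp [hG'def, hφ0, hf''def]
  have key : Tendsto (fun ρ => h ρ / ρ ^ 2) (𝓝[≠] (0:ℝ))
      (𝓝 (f'' ((c, s) : ℝ × ℝ) ((c, s) : ℝ × ℝ) / 2)) := by
    apply HasDerivAt.lhopital_zero_nhdsNE (f' := fun ρ => ρ * G' ρ) (g' := fun ρ => 2 * ρ)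
    · filter_upwards [nhdsWithin_le_nhds hWnhds] with ρ hρ using hh' ρ hρ
    · filter_upwards with ρ
      simpa using hasDerivAt_pow 2 ρ
    · filter_upwards [self_mem_nhdsWithin] with ρ hρ
      simpa using sub_ne_zero.mp (by simpa [sub_zero] using hρ ∘ (by simp))
    · have hcont : ContinuousAt h 0 := (hh' 0 h0W).continuousAt
      have h0 : h 0 = 0 := by simp [hhdef]
      have := tendsto_nhdsWithin_of_tendsto_nhds (s := ({0}ᶜ : Set ℝ)) hcont.tendsto
      rwa [h0] at this
    · have : Tendsto (fun ρ : ℝ => ρ ^ 2) (𝓝 0) (𝓝 (0 ^ 2)) :=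
        (continuous_pow 2).continuousAt.tendsto
      simpa using tendsto_nhdsWithin_of_tendsto_nhds this
    · have h1 : Tendsto (fun ρ => G' ρ / 2) (𝓝[≠] (0:ℝ)) (𝓝 (G' 0 / 2)) :=
        tendsto_nhdsWithin_of_tendsto_nhds (hG'cont.div_const 2)
      rw [← hG'0]
      apply h1.congr'
      filter_upwards [self_mem_nhdsWithin] with ρ hρ
      have hρ0 : ρ ≠ 0 := hρ
      field_simp
  -- identify the limit value
  have hcs : ((c, s) : ℝ × ℝ) = c • ((1:ℝ), (0:ℝ)) + s • ((0:ℝ), (1:ℝ)) := by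
    simp [Prod.ext_iff]
  have hlin : ∀ q : ℝ × ℝ, F q ((c, s) : ℝ × ℝ) = c * F q (1, 0) + s * F q (0, 1) := by
    intro q
    rw [hcs, map_add, map_smul, map_smul]
    simp
  have happ : ∀ w u : ℝ × ℝ, fderiv ℝ (fun q => F q w) (x₀, y₀) u = f'' u w := by
    intro w u
    have h1 : HasFDerivAt (fun q => F q w)
        ((ContinuousLinearMap.apply ℝ ℝ w).comp f'') (x₀, y₀) :=
      (ContinuousLinearMap.apply ℝ ℝ w).hasFDerivAt.comp (x₀, y₀) hf''at
    rw [h1.fderiv]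
    simp
  have e1 : f'' ((c, s) : ℝ × ℝ) ((c, s) : ℝ × ℝ) =
      c * (c * f'' (1, 0) (1, 0) + s * f'' (1, 0) (0, 1)) +
        s * (c * f'' (0, 1) (1, 0) + s * f'' (0, 1) (0, 1)) := by
    rw [hcs]
    simp only [map_add, map_smul, ContinuousLinearMap.add_apply,
      ContinuousLinearMap.smul_apply, smul_eq_mul]
    ring
  have hval : f'' ((c, s) : ℝ × ℝ) ((c, s) : ℝ × ℝ) / 2 =
      1 / 2 * (fderiv ℝ (fun q => F q (1, 0)) (x₀, y₀) (1, 0) * c ^ 2 +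
        2 * fderiv ℝ (fun q => F q (1, 0)) (x₀, y₀) (0, 1) * c * s +
        fderiv ℝ (fun q => F q (0, 1)) (x₀, y₀) (0, 1) * s ^ 2) := by
    rw [happ, happ, happ, e1, hsymm (1, 0) (0, 1)]
    ring
  rw [hval] at key
  apply key.congr
  intro ρ
  have : ((x₀ + ρ * c, y₀ + ρ * s) : ℝ × ℝ) = φ ρ := rfl
  simp only [hhdef, hGdef, hgdef, hφ0, hlin]
  ring
end
end
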